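/- For any y ∈ ℝ^p, any z ∈ ℝ^p with z_j > 0, any α ∈ (0,2), and β = α/(2−α), one has ‖y‖_α ≤ (1/2)∑_{j=1}^p y_j²/z_j + (1/2)‖z‖_β. -/

import Mathlib

open scoped BigOperators

/-- The ℓ_α quasi-norm of a vector `y ∈ ℝ^p`. -/
noncomputable def lpQuasiNorm {p : ℕ} (α : ℝ) (y : Fin p → ℝ) : ℝ :=
  (∑ j, |y j| ^ α) ^ (1 / α)

/-- The inequality direction of the variational lemma: for any `y`, any `z` with
positive entries, `α ∈ (0,2)` and `β = α/(2-α)`,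
`‖y‖_α ≤ (1/2)∑ y_j²/z_j + (1/2)‖z‖_β`. -/
theorem lpQuasiNorm_le_varObj {p : ℕ} (α β : ℝ)
    (hα : α ∈ Set.Ioo (0 : ℝ) 2) (hβ : β = α / (2 - α))
    (y z : Fin p → ℝ) (hz : ∀ j, 0 < z j) :
    lpQuasiNorm α y ≤ (1 / 2) * ∑ j, y j ^ 2 / z j + (1 / 2) * lpQuasiNorm β z := by
  obtain ⟨hα0, hα2⟩ := hα
  have h2α : (0:ℝ) < 2 - α := by linarith
  have hβ0 : 0 < β := by rw [hβ]; positivity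
  set A : ℝ := ∑ j, y j ^ 2 / z j with hA
  set S : ℝ := ∑ j, |z j| ^ β with hS
  set B : ℝ := S ^ (1/β) with hB
  have hAnn : 0 ≤ A := Finset.sum_nonneg fun j _ => by have := hz j; positivity
  have hSnn : 0 ≤ S := Finset.sum_nonneg fun j _ => by positivity
  have hBnn : 0 ≤ B := Real.rpow_nonneg hSnn _
  have hconj : Real.HolderConjugate (2/α) (2/(2-α)) := by
    rw [Real.holderConjugate_iff]
    constructor
    · rw [lt_div_iff₀ hα0]; linarith
    · field_simp; ring
  have hf : ∀ j ∈ Finset.univ (α := Fin p), 0 ≤ (y j ^ 2 / z j) ^ (α/2) := fun j _ => by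
    have := hz j; positivity
  have hg : ∀ j ∈ Finset.univ (α := Fin p), 0 ≤ (z j) ^ (α/2) := fun j _ => by
    have := hz j; positivity
  have hold := Real.inner_le_Lp_mul_Lq_of_nonneg Finset.univ hconj hf hg
  have key : ∑ j, |y j| ^ α ≤ A ^ (α/2) * S ^ ((2-α)/2) := by
    have e1 : ∀ j : Fin p, |y j| ^ α = (y j ^ 2 / z j) ^ (α/2) * (z j) ^ (α/2) := by
      intro j
      have hzj := hz j
      rw [← Real.mul_rpow (by positivity) hzj.le, div_mul_cancel₀ _ hzj.ne',
        ← sq_abs (y j), ← Real.rpow_natCast |y j| 2, ← Real.rpow_mul (abs_nonneg _)]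
      congr 1; push_cast; ring
    have e2 : ∀ j : Fin p, ((y j ^ 2 / z j) ^ (α/2)) ^ (2/α) = y j ^ 2 / z j := by
      intro j
      have hzj := hz j
      rw [← Real.rpow_mul (by positivity)]
      rw [div_mul_div_comm, mul_comm, div_self (by positivity), Real.rpow_one]
    have e3 : ∀ j : Fin p, ((z j) ^ (α/2)) ^ (2/(2-α)) = |z j| ^ β := by
      intro j
      have hzj := hz j
      rw [← Real.rpow_mul hzj.le, abs_of_pos hzj, hβ]
      congr 1
      field_simp
    have e4 : 1/(2/α) = α/2 := by rw [one_div_div]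
    have e5 : 1/(2/(2-α)) = (2-α)/2 := by rw [one_div_div]
    calc ∑ j, |y j| ^ α = ∑ j, (y j ^ 2 / z j) ^ (α/2) * (z j) ^ (α/2) := by
            exact Finset.sum_congr rfl fun j _ => e1 j
      _ ≤ _ := hold
      _ = A ^ (α/2) * S ^ ((2-α)/2) := by
            rw [e4, e5]
            congr 1
            · congr 1; exact Finset.sum_congr rfl fun j _ => e2 j
            · congr 1; exact Finset.sum_congr rfl fun j _ => e3 j
  have main : lpQuasiNorm α y ≤ Real.sqrt A * Real.sqrt B := by
    have hsum_nn : 0 ≤ ∑ j : Fin p, |y j| ^ α :=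
      Finset.sum_nonneg fun j _ => by positivity
    have step : lpQuasiNorm α y ≤ (A ^ (α/2) * S ^ ((2-α)/2)) ^ (1/α) :=
      Real.rpow_le_rpow hsum_nn key (by positivity)
    have eq2 : (A ^ (α/2) * S ^ ((2-α)/2)) ^ (1/α)
        = Real.sqrt A * Real.sqrt B := by
      rw [Real.mul_rpow (by positivity) (by positivity),
        ← Real.rpow_mul hAnn, ← Real.rpow_mul hSnn, hB,
        Real.sqrt_eq_rpow, Real.sqrt_eq_rpow, ← Real.rpow_mul hSnn]
      congr 1
      · congr 1; field_simp
      · congr 1; rw [hβ]; field_simp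
    rw [eq2] at step; exact step
  have amgm : Real.sqrt A * Real.sqrt B ≤ (1/2) * A + (1/2) * B := by
    nlinarith [sq_nonneg (Real.sqrt A - Real.sqrt B), Real.sq_sqrt hAnn, Real.sq_sqrt hBnn]
  have : lpQuasiNorm β z = B := rfl
  rw [this] at *
  linarith
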